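/- Let V be a commutative unital quantale and (X,a) a V-category. The following are equivalent: (i) X is L-complete: every right adjoint V-module ψ : X ⇸ E is of the form ψ = a(−,x₀) for some x₀ ∈ X; (ii) X is L-injective: for every fully faithful L-dense V-functor i : (A,c) → (B,d) and every V-functor h : A → X there is a V-functor g : B → X with g∘i ≅ h; (iii) the Yoneda functor y : X → X̃ has a pseudo left inverse, i.e. there is a V-functor R : X̃ → X with k ≤ a(R(y(x)),x) and k ≤ a(x,R(y(x))) for all x ∈ X. -/

import Mathlib

/-- The internal hom of a quantale: `u ⊸ v = sSup {z | z * u ≤ v}`. -/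
def qhom {V : Type*} [CommMonoid V] [CompleteLattice V] [IsQuantale V] (u v : V) : V :=
  sSup {z | z * u ≤ v}

lemma one_le_qhom_self {V : Type*} [CommMonoid V] [CompleteLattice V] [IsQuantale V]
    (u : V) : (1 : V) ≤ qhom u u :=
  le_sSup (by simp)

/-- `ψ : X → V` is a V-module `X ⇸ E` (a contravariant V-functor, an element of `X̂`). -/
def IsMod {V : Type*} [CommMonoid V] [CompleteLattice V] [IsQuantale V]
    {X : Type*} (a : X → X → V) (ψ : X → V) : Prop :=
  ∀ x y, a x y * ψ y ≤ ψ x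

/-- `ψ` is tight: `k ≤ ⋁_y ψ y ⊗ ⋀_x (ψ x ⊸ a x y)`. -/
def Tight {V : Type*} [CommMonoid V] [CompleteLattice V] [IsQuantale V]
    {X : Type*} (a : X → X → V) (ψ : X → V) : Prop :=
  (1 : V) ≤ ⨆ y : X, ψ y * ⨅ x : X, qhom (ψ x) (a x y)

/-- `ψ : X ⇸ E` is a right adjoint V-module. -/
def IsRightAdj {V : Type*} [CommMonoid V] [CompleteLattice V] [IsQuantale V]
    {X : Type*} (a : X → X → V) (ψ : X → V) : Prop :=
  ∃ φ : X → V, (∀ x y, φ y * a y x ≤ φ x) ∧ (∀ x y, ψ x * φ y ≤ a x y) ∧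
    (1 : V) ≤ ⨆ x : X, φ x * ψ x

/-- The V-category `X̃` of tight presheaves on `(X,a)`. -/
def Tilde {V : Type*} [CommMonoid V] [CompleteLattice V] [IsQuantale V]
    {X : Type*} (a : X → X → V) : Type _ :=
  {ψ : X → V // IsMod a ψ ∧ Tight a ψ}

/-- The V-category structure on `X̃`: `â(ψ,ψ') = ⋀_x (ψ x ⊸ ψ' x)`. -/
def ahat {V : Type*} [CommMonoid V] [CompleteLattice V] [IsQuantale V]
    {X : Type*} (a : X → X → V) (ψ ψ' : Tilde a) : V :=
  ⨅ x : X, qhom (ψ.1 x) (ψ'.1 x)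

/-- The Yoneda functor `X → X̃`, `x ↦ a (−, x)`. -/
def yonedaT {V : Type*} [CommMonoid V] [CompleteLattice V] [IsQuantale V]
    {X : Type*} (a : X → X → V) (ha1 : ∀ x, (1 : V) ≤ a x x)
    (ha2 : ∀ x y z, a x y * a y z ≤ a x z) (x : X) : Tilde a :=
  ⟨fun z => a z x, fun z w => ha2 z w x, by
    unfold Tight
    refine le_trans ?_ (le_iSup (fun y => a y x * ⨅ z : X, qhom (a z x) (a z y)) x)
    have h1 : (1 : V) ≤ a x x := ha1 x
    have h2 : (1 : V) ≤ ⨅ z : X, qhom (a z x) (a z x) :=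
      le_iInf fun z => one_le_qhom_self _
    calc (1 : V) = 1 * 1 := (one_mul 1).symm
      _ ≤ a x x * ⨅ z : X, qhom (a z x) (a z x) := mul_le_mul' h1 h2⟩

section QhomLemmas
variable {V : Type*} [CommMonoid V] [CompleteLattice V] [IsQuantale V]

lemma qhom_mul_le (u v : V) : qhom u v * u ≤ v := by
  rw [qhom, sSup_mul_distrib]
  exact iSup₂_le fun z hz => hz

lemma le_qhom {u v z : V} (h : z * u ≤ v) : z ≤ qhom u v := le_sSup h

end QhomLemmas

/-- for a V-category `(X,a)` the following are equivalent:
(i) `X` is L-complete; (ii) `X` is L-injective (w.r.t. fully faithful L-dense V-functors);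
(iii) the Yoneda functor `X → X̃` has a pseudo left inverse. -/
theorem stmt18 {V : Type w} [CommMonoid V] [CompleteLattice V] [IsQuantale V]
    {X : Type u}
    (a : X → X → V) (ha1 : ∀ x, (1 : V) ≤ a x x)
    (ha2 : ∀ x y z, a x y * a y z ≤ a x z) :
    List.TFAE
      [ (∀ ψ : X → V, IsMod a ψ → IsRightAdj a ψ → ∃ x₀ : X, ∀ x, ψ x = a x x₀),
        (∀ (A B : Type (max u w)) (c : A → A → V) (d : B → B → V),
          (∀ p, (1 : V) ≤ c p p) → (∀ p q r, c p q * c q r ≤ c p r) →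
          (∀ p, (1 : V) ≤ d p p) → (∀ p q r, d p q * d q r ≤ d p r) →
          ∀ i : A → B,
            (∀ p q, c p q = d (i p) (i q)) →
            (∀ b b', d b b' = ⨆ p : A, d b (i p) * d (i p) b') →
            ∀ h : A → X, (∀ p q, c p q ≤ a (h p) (h q)) →
              ∃ g : B → X, (∀ b b', d b b' ≤ a (g b) (g b')) ∧
                (∀ p, (1 : V) ≤ a (g (i p)) (h p)) ∧
                (∀ p, (1 : V) ≤ a (h p) (g (i p)))),
        (∃ R : Tilde a → X,
          (∀ ψ ψ' : Tilde a, ahat a ψ ψ' ≤ a (R ψ) (R ψ')) ∧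
          (∀ x : X, (1 : V) ≤ a (R (yonedaT a ha1 ha2 x)) x ∧
            (1 : V) ≤ a x (R (yonedaT a ha1 ha2 x)))) ] := by
  tfae_have 1 → 3 := by
    intro h1
    have key : ∀ ψ : Tilde a, ∃ x₀ : X, ∀ x, ψ.1 x = a x x₀ := by
      intro ψ
      refine h1 ψ.1 ψ.2.1 ?_
      refine ⟨fun x => ⨅ z : X, qhom (ψ.1 z) (a z x), ?_, ?_, ?_⟩
      · intro x y
        refine le_iInf fun z => le_qhom ?_
        calc (⨅ w : X, qhom (ψ.1 w) (a w y)) * a y x * ψ.1 z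
            = (⨅ w : X, qhom (ψ.1 w) (a w y)) * ψ.1 z * a y x := mul_right_comm _ _ _
          _ ≤ qhom (ψ.1 z) (a z y) * ψ.1 z * a y x :=
              mul_le_mul_left (mul_le_mul_left (iInf_le _ z) _) _
          _ ≤ a z y * a y x := mul_le_mul_left (qhom_mul_le _ _) _
          _ ≤ a z x := ha2 z y x
      · intro x y
        calc ψ.1 x * ⨅ z : X, qhom (ψ.1 z) (a z y)
            ≤ ψ.1 x * qhom (ψ.1 x) (a x y) := mul_le_mul_right (iInf_le _ x) _
          _ = qhom (ψ.1 x) (a x y) * ψ.1 x := mul_comm _ _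
          _ ≤ a x y := qhom_mul_le _ _
      · refine le_trans ψ.2.2 (iSup_mono fun y => (mul_comm _ _).le)
    choose R hR using key
    refine ⟨R, ?_, ?_⟩
    · intro ψ ψ'
      calc ahat a ψ ψ' = ahat a ψ ψ' * 1 := (mul_one _).symm
        _ ≤ qhom (ψ.1 (R ψ)) (ψ'.1 (R ψ)) * ψ.1 (R ψ) := by
            refine mul_le_mul' (iInf_le _ (R ψ)) ?_
            rw [hR ψ (R ψ)]; exact ha1 _
        _ ≤ ψ'.1 (R ψ) := qhom_mul_le _ _
        _ = a (R ψ) (R ψ') := hR ψ' (R ψ)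
    · intro x
      have h₁ : ∀ z, a z x = a z (R (yonedaT a ha1 ha2 x)) := hR (yonedaT a ha1 ha2 x)
      constructor
      · rw [h₁ (R (yonedaT a ha1 ha2 x))]; exact ha1 _
      · rw [← h₁ x]; exact ha1 x
  tfae_have 3 → 2 := by
    rintro ⟨R, hRf, hRy⟩
    intro A B c d hc1 hc2 hd1 hd2 i hff hdense h hh
    have key : ∀ (b : B) (x : X) (p : A),
        (⨆ q : A, a x (h q) * d (i q) b) * d b (i p) ≤ a x (h p) := by
      intro b x p
      rw [Quantale.iSup_mul_distrib]
      refine iSup_le fun q => ?_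
      calc a x (h q) * d (i q) b * d b (i p)
          = a x (h q) * (d (i q) b * d b (i p)) := mul_assoc _ _ _
        _ ≤ a x (h q) * d (i q) (i p) := mul_le_mul_right (hd2 _ _ _) _
        _ = a x (h q) * c q p := by rw [hff]
        _ ≤ a x (h q) * a (h q) (h p) := mul_le_mul_right (hh q p) _
        _ ≤ a x (h p) := ha2 _ _ _
    have hmodb : ∀ b : B, IsMod a (fun z => ⨆ q : A, a z (h q) * d (i q) b) := by
      intro b z w
      simp only
      rw [Quantale.mul_iSup_distrib]
      refine iSup_mono fun q => ?_
      calc a z w * (a w (h q) * d (i q) b) = a z w * a w (h q) * d (i q) b :=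
            (mul_assoc _ _ _).symm
        _ ≤ a z (h q) * d (i q) b := mul_le_mul_left (ha2 _ _ _) _
    have hpsi_ge : ∀ (b : B) (p : A), d (i p) b ≤ ⨆ q : A, a (h p) (h q) * d (i q) b := by
      intro b p
      refine le_trans ?_ (le_iSup _ p)
      calc d (i p) b = 1 * d (i p) b := (one_mul _).symm
        _ ≤ a (h p) (h p) * d (i p) b :=
            mul_le_mul_left (le_trans (hc1 p) (hh p p)) _
    have htight : ∀ b : B, Tight a (fun z => ⨆ q : A, a z (h q) * d (i q) b) := by
      intro b
      unfold Tight
      calc (1 : V) ≤ d b b := hd1 b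
        _ = ⨆ p : A, d b (i p) * d (i p) b := hdense b b
        _ ≤ ⨆ y : X, (⨆ q : A, a y (h q) * d (i q) b) *
              ⨅ x : X, qhom (⨆ q : A, a x (h q) * d (i q) b) (a x y) := by
            refine iSup_le fun p => le_trans ?_ (le_iSup _ (h p))
            calc d b (i p) * d (i p) b = d (i p) b * d b (i p) := mul_comm _ _
              _ ≤ (⨆ q : A, a (h p) (h q) * d (i q) b) *
                    ⨅ x : X, qhom (⨆ q : A, a x (h q) * d (i q) b) (a x (h p)) :=
                  mul_le_mul' (hpsi_ge b p)
                    (le_iInf fun x => le_qhom ((mul_comm _ _).le.trans (key b x p)))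
    let Ψ : B → Tilde a := fun b => ⟨fun z => ⨆ q : A, a z (h q) * d (i q) b, hmodb b, htight b⟩
    have hfun : ∀ b b', d b b' ≤ ahat a (Ψ b) (Ψ b') := by
      intro b b'
      refine le_iInf fun x => le_qhom ?_
      show d b b' * (⨆ q : A, a x (h q) * d (i q) b) ≤ ⨆ q : A, a x (h q) * d (i q) b'
      rw [mul_comm, Quantale.iSup_mul_distrib]
      refine iSup_le fun q => le_trans ?_ (le_iSup _ q)
      calc a x (h q) * d (i q) b * d b b' = a x (h q) * (d (i q) b * d b b') := mul_assoc _ _ _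
        _ ≤ a x (h q) * d (i q) b' := mul_le_mul_right (hd2 _ _ _) _
    have hiso1 : ∀ p : A, (1 : V) ≤ ahat a (Ψ (i p)) (yonedaT a ha1 ha2 (h p)) := by
      intro p
      refine le_iInf fun x => le_qhom ?_
      rw [one_mul]
      show (⨆ q : A, a x (h q) * d (i q) (i p)) ≤ a x (h p)
      calc (⨆ q : A, a x (h q) * d (i q) (i p))
          = (⨆ q : A, a x (h q) * d (i q) (i p)) * 1 := (mul_one _).symm
        _ ≤ (⨆ q : A, a x (h q) * d (i q) (i p)) * d (i p) (i p) :=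
            mul_le_mul_right (hd1 _) _
        _ ≤ a x (h p) := key (i p) x p
    have hiso2 : ∀ p : A, (1 : V) ≤ ahat a (yonedaT a ha1 ha2 (h p)) (Ψ (i p)) := by
      intro p
      refine le_iInf fun x => le_qhom ?_
      rw [one_mul]
      show a x (h p) ≤ ⨆ q : A, a x (h q) * d (i q) (i p)
      refine le_trans ?_ (le_iSup _ p)
      calc a x (h p) = a x (h p) * 1 := (mul_one _).symm
        _ ≤ a x (h p) * d (i p) (i p) := mul_le_mul_right (hd1 _) _
    refine ⟨fun b => R (Ψ b), fun b b' => le_trans (hfun b b') (hRf _ _),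
      fun p => ?_, fun p => ?_⟩
    · calc (1 : V) = 1 * 1 := (one_mul 1).symm
        _ ≤ ahat a (Ψ (i p)) (yonedaT a ha1 ha2 (h p)) *
              a (R (yonedaT a ha1 ha2 (h p))) (h p) :=
            mul_le_mul' (hiso1 p) (hRy (h p)).1
        _ ≤ a (R (Ψ (i p))) (R (yonedaT a ha1 ha2 (h p))) *
              a (R (yonedaT a ha1 ha2 (h p))) (h p) :=
            mul_le_mul_left (hRf _ _) _
        _ ≤ a (R (Ψ (i p))) (h p) := ha2 _ _ _
    · calc (1 : V) = 1 * 1 := (one_mul 1).symm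
        _ ≤ a (h p) (R (yonedaT a ha1 ha2 (h p))) *
              ahat a (yonedaT a ha1 ha2 (h p)) (Ψ (i p)) :=
            mul_le_mul' (hRy (h p)).2 (hiso2 p)
        _ ≤ a (h p) (R (yonedaT a ha1 ha2 (h p))) *
              a (R (yonedaT a ha1 ha2 (h p))) (R (Ψ (i p))) :=
            mul_le_mul_right (hRf _ _) _
        _ ≤ a (h p) (R (Ψ (i p))) := ha2 _ _ _
  tfae_have 2 → 1 := by
    intro h2 ψ hmod hra
    obtain ⟨φ, hφ, hadj, hcounit⟩ := hra
    let d : Option (ULift.{w} X) → Option (ULift.{w} X) → V := fun b b' =>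
      match b, b' with
      | some p, some q => a p.down q.down
      | some p, none => ψ p.down
      | none, some q => φ q.down
      | none, none => ⨆ x : X, φ x * ψ x
    have hd1 : ∀ b, (1 : V) ≤ d b b := by
      rintro (_ | p)
      · exact hcounit
      · exact ha1 p.down
    have hd2 : ∀ b b' b'', d b b' * d b' b'' ≤ d b b'' := by
      rintro (_ | p) (_ | q) (_ | r)
      · show (⨆ x : X, φ x * ψ x) * (⨆ x : X, φ x * ψ x) ≤ ⨆ x : X, φ x * ψ x
        rw [Quantale.iSup_mul_distrib]
        refine iSup_le fun z => ?_
        rw [Quantale.mul_iSup_distrib]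
        refine iSup_le fun w => le_trans ?_ (le_iSup _ w)
        calc φ z * ψ z * (φ w * ψ w) = φ z * (ψ z * φ w) * ψ w := by
              rw [mul_assoc, mul_assoc, mul_assoc]
          _ ≤ φ z * a z w * ψ w :=
            mul_le_mul_left (mul_le_mul_right (hadj z w) _) _
          _ ≤ φ w * ψ w := mul_le_mul_left (hφ w z) _
      · show (⨆ x : X, φ x * ψ x) * φ r.down ≤ φ r.down
        rw [Quantale.iSup_mul_distrib]
        refine iSup_le fun z => ?_
        calc φ z * ψ z * φ r.down = φ z * (ψ z * φ r.down) := mul_assoc _ _ _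
          _ ≤ φ z * a z r.down := mul_le_mul_right (hadj _ _) _
          _ ≤ φ r.down := hφ r.down z
      · exact le_iSup (fun x => φ x * ψ x) q.down
      · exact hφ r.down q.down
      · show ψ p.down * ⨆ x : X, φ x * ψ x ≤ ψ p.down
        rw [Quantale.mul_iSup_distrib]
        refine iSup_le fun z => ?_
        calc ψ p.down * (φ z * ψ z) = ψ p.down * φ z * ψ z := (mul_assoc _ _ _).symm
          _ ≤ a p.down z * ψ z := mul_le_mul_left (hadj _ _) _
          _ ≤ ψ p.down := hmod _ _
      · exact hadj p.down r.down
      · exact hmod p.down q.down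
      · exact ha2 _ _ _
    have hdense : ∀ b b', d b b' =
        ⨆ p : ULift.{w} X, d b (some p) * d (some p) b' := by
      rintro (_ | x) (_ | y)
      · refine le_antisymm (iSup_le fun z => le_iSup
          (fun p : ULift.{w} X => φ p.down * ψ p.down) ⟨z⟩) (iSup_le fun p => le_iSup (fun x : X => φ x * ψ x) p.down)
      · refine le_antisymm (le_trans ?_ (le_iSup _ y)) (iSup_le fun p => hφ y.down p.down)
        calc φ y.down = φ y.down * 1 := (mul_one _).symm
          _ ≤ φ y.down * a y.down y.down := mul_le_mul_right (ha1 _) _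
      · refine le_antisymm (le_trans ?_ (le_iSup _ x)) (iSup_le fun p => hmod x.down p.down)
        calc ψ x.down = 1 * ψ x.down := (one_mul _).symm
          _ ≤ a x.down x.down * ψ x.down := mul_le_mul_left (ha1 _) _
      · refine le_antisymm (le_trans ?_ (le_iSup _ x)) (iSup_le fun p => ha2 _ _ _)
        calc a x.down y.down = 1 * a x.down y.down := (one_mul _).symm
          _ ≤ a x.down x.down * a x.down y.down := mul_le_mul_left (ha1 _) _
    obtain ⟨g, hg, hg1, hg2⟩ := h2 (ULift.{w} X) (Option (ULift.{w} X))
      (fun p q => a p.down q.down) d (fun p => ha1 p.down) (fun p q r => ha2 _ _ _)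
      hd1 hd2 some (fun p q => rfl) hdense (fun p => p.down) (fun p q => le_rfl)
    refine ⟨g none, fun x => le_antisymm ?_ ?_⟩
    · have h₁ : ψ x ≤ a (g (some ⟨x⟩)) (g none) := hg (some ⟨x⟩) none
      calc ψ x = 1 * ψ x := (one_mul _).symm
        _ ≤ a x (g (some ⟨x⟩)) * a (g (some ⟨x⟩)) (g none) := mul_le_mul' (hg2 ⟨x⟩) h₁
        _ ≤ a x (g none) := ha2 _ _ _
    · have hφle : ∀ y : X, φ y ≤ a (g none) y := by
        intro y
        calc φ y = φ y * 1 := (mul_one _).symm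
          _ ≤ a (g none) (g (some ⟨y⟩)) * a (g (some ⟨y⟩)) y :=
              mul_le_mul' (hg none (some ⟨y⟩)) (hg1 ⟨y⟩)
          _ ≤ a (g none) y := ha2 _ _ _
      calc a x (g none) = a x (g none) * 1 := (mul_one _).symm
        _ ≤ a x (g none) * ⨆ y : X, φ y * ψ y := mul_le_mul_right hcounit _
        _ = ⨆ y : X, a x (g none) * (φ y * ψ y) := Quantale.mul_iSup_distrib
        _ ≤ ψ x := by
            refine iSup_le fun y => ?_
            calc a x (g none) * (φ y * ψ y) = a x (g none) * φ y * ψ y :=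
                  (mul_assoc _ _ _).symm
              _ ≤ a x (g none) * a (g none) y * ψ y :=
                  mul_le_mul_left (mul_le_mul_right (hφle y) _) _
              _ ≤ a x y * ψ y := mul_le_mul_left (ha2 _ _ _) _
              _ ≤ ψ x := hmod x y
  tfae_finish
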